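/- Let h_d(t) = 2∫₀^{arcsin√(1−t²)} (cos θ − t)^{d−1} cos θ dθ for t ∈ [0,1] and integer d ≥ 2. Then h_d is differentiable on (0,1) with h_d′(t) = −(d−1)·h_{d−1}(t); in particular h_d is decreasing on [0,1] and h_d(1) = 0. -/

import Mathlib

open Real MeasureTheory Set

/-- `hfun d t = 2 ∫₀^{arcsin √(1−t²)} (cos θ − t)^{d−1} cos θ dθ`. -/
noncomputable def hfun (d : ℕ) (t : ℝ) : ℝ :=
  2 * ∫ θ in (0:ℝ)..(Real.arcsin (Real.sqrt (1 - t ^ 2))), (Real.cos θ - t) ^ (d - 1) * Real.cos θ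

private lemma arcsin_sqrt_eq {t : ℝ} (h0 : 0 ≤ t) (h1 : t ≤ 1) :
    Real.arcsin (Real.sqrt (1 - t ^ 2)) = Real.arccos t := by
  rw [← Real.sin_arccos, Real.arcsin_sin]
  · linarith [Real.arccos_nonneg t, Real.pi_div_two_pos]
  · exact Real.arccos_le_pi_div_two.2 h0

private lemma abs_pow_sub_pow_le' {a b M : ℝ} (n : ℕ) (ha : |a| ≤ M) (hb : |b| ≤ M) :
    |a ^ n - b ^ n| ≤ n * M ^ (n - 1) * |a - b| := by
  have hM : 0 ≤ M := le_trans (abs_nonneg a) ha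
  rw [← geom_sum₂_mul, abs_mul]
  gcongr
  calc |∑ i ∈ Finset.range n, a ^ i * b ^ (n - 1 - i)|
      ≤ ∑ i ∈ Finset.range n, |a ^ i * b ^ (n - 1 - i)| := Finset.abs_sum_le_sum_abs _ _
    _ ≤ ∑ _i ∈ Finset.range n, M ^ (n - 1) := by
        apply Finset.sum_le_sum
        intro i hi
        rw [Finset.mem_range] at hi
        rw [abs_mul, abs_pow, abs_pow]
        have h1 : |a| ^ i ≤ M ^ i := pow_le_pow_left₀ (abs_nonneg a) ha i
        have h2 : |b| ^ (n - 1 - i) ≤ M ^ (n - 1 - i) := pow_le_pow_left₀ (abs_nonneg b) hb _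
        calc |a| ^ i * |b| ^ (n - 1 - i) ≤ M ^ i * M ^ (n - 1 - i) := by
              apply mul_le_mul h1 h2 (by positivity) (by positivity)
          _ = M ^ (i + (n - 1 - i)) := (pow_add M i (n - 1 - i)).symm
          _ = M ^ (n - 1) := by congr 1; omega
    _ = n * M ^ (n - 1) := by rw [Finset.sum_const, Finset.card_range, nsmul_eq_mul]

/-- The “truncated” representation of the integral over the full quarter period. -/
private lemma integral_max_eq (n : ℕ) (hn : 1 ≤ n) {t : ℝ} (h0 : 0 ≤ t) (h1 : t ≤ 1) :
    ∫ θ in (0:ℝ)..(π/2), max (Real.cos θ - t) 0 ^ n * Real.cos θ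
      = ∫ θ in (0:ℝ)..Real.arccos t, (Real.cos θ - t) ^ n * Real.cos θ := by
  have ha0 : 0 ≤ Real.arccos t := Real.arccos_nonneg t
  have ha1 : Real.arccos t ≤ π / 2 := Real.arccos_le_pi_div_two.2 h0
  have hca : Real.cos (Real.arccos t) = t := Real.cos_arccos (by linarith) h1
  have hint1 : IntervalIntegrable (fun θ => max (Real.cos θ - t) 0 ^ n * Real.cos θ)
      volume 0 (Real.arccos t) := by
    apply Continuous.intervalIntegrable; fun_prop
  have hint2 : IntervalIntegrable (fun θ => max (Real.cos θ - t) 0 ^ n * Real.cos θ)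
      volume (Real.arccos t) (π/2) := by
    apply Continuous.intervalIntegrable; fun_prop
  rw [← intervalIntegral.integral_add_adjacent_intervals hint1 hint2]
  have h2 : ∫ θ in (Real.arccos t)..(π/2), max (Real.cos θ - t) 0 ^ n * Real.cos θ = 0 := by
    rw [intervalIntegral.integral_congr (g := fun _ => (0:ℝ))]
    · simp
    · intro θ hθ
      rw [Set.uIcc_of_le ha1] at hθ
      obtain ⟨hθ1, hθ2⟩ := hθ
      have hcos : Real.cos θ ≤ t := by
        rw [← hca]
        exact Real.cos_le_cos_of_nonneg_of_le_pi ha0 (by linarith [Real.pi_pos]) hθ1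
      have hmax : max (Real.cos θ - t) 0 = 0 := max_eq_right (by linarith)
      simp only
      rw [hmax, zero_pow (by omega : n ≠ 0), zero_mul]
  have h1' : ∫ θ in (0:ℝ)..(Real.arccos t), max (Real.cos θ - t) 0 ^ n * Real.cos θ
      = ∫ θ in (0:ℝ)..Real.arccos t, (Real.cos θ - t) ^ n * Real.cos θ := by
    apply intervalIntegral.integral_congr
    intro θ hθ
    rw [Set.uIcc_of_le ha0] at hθ
    obtain ⟨hθ1, hθ2⟩ := hθ
    have hcos : t ≤ Real.cos θ := by
      rw [← hca]
      exact Real.cos_le_cos_of_nonneg_of_le_pi hθ1 (by linarith [Real.pi_pos]) hθ2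
    simp only
    rw [max_eq_left (by linarith)]
  rw [h1', h2, add_zero]

theorem stmt0 (d : ℕ) (hd : 2 ≤ d) :
    (∀ t ∈ Set.Ioo (0:ℝ) 1, HasDerivAt (hfun d) (-((d : ℝ) - 1) * hfun (d - 1) t) t) ∧
    AntitoneOn (hfun d) (Set.Icc (0:ℝ) 1) ∧ hfun d 1 = 0 := by
  set n := d - 1 with hn_def
  have hn1 : 1 ≤ n := by omega
  have hdn : (n : ℝ) = (d : ℝ) - 1 := by
    have : (((d:ℕ) - 1 : ℕ) : ℝ) = (d : ℝ) - 1 := by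
      push_cast [Nat.cast_sub (by omega : 1 ≤ d)]; ring
    simpa [hn_def] using this
  -- the auxiliary "global" function
  set G : ℝ → ℝ := fun t => 2 * ∫ θ in (0:ℝ)..(π/2), max (Real.cos θ - t) 0 ^ n * Real.cos θ
    with hG_def
  have hGfun : ∀ t ∈ Set.Icc (0:ℝ) 1, hfun d t = G t := by
    intro t ht
    rw [hG_def]
    simp only [hfun, arcsin_sqrt_eq ht.1 ht.2]
    rw [integral_max_eq n hn1 ht.1 ht.2]
  have hGcont : Continuous G := by
    apply Continuous.mul continuous_const
    apply intervalIntegral.continuous_parametric_intervalIntegral_of_continuous'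
    fun_prop
  -- hfun of d - 1 expressed as an interval integral up to arccos
  have hprev : ∀ t ∈ Set.Icc (0:ℝ) 1, hfun (d-1) t
      = 2 * ∫ θ in (0:ℝ)..Real.arccos t, (Real.cos θ - t) ^ (n-1) * Real.cos θ := by
    intro t ht
    simp only [hfun, arcsin_sqrt_eq ht.1 ht.2]
    rfl
  -- nonnegativity of hfun (d-1)
  have hprev_nonneg : ∀ t ∈ Set.Icc (0:ℝ) 1, 0 ≤ hfun (d-1) t := by
    intro t ht
    rw [hprev t ht]
    have ha0 : 0 ≤ Real.arccos t := Real.arccos_nonneg t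
    have ha1 : Real.arccos t ≤ π / 2 := Real.arccos_le_pi_div_two.2 ht.1
    have hca : Real.cos (Real.arccos t) = t := Real.cos_arccos (by linarith [ht.1]) ht.2
    have : 0 ≤ ∫ θ in (0:ℝ)..Real.arccos t, (Real.cos θ - t) ^ (n-1) * Real.cos θ := by
      apply intervalIntegral.integral_nonneg ha0
      intro θ hθ
      obtain ⟨hθ1, hθ2⟩ := hθ
      have hcos : t ≤ Real.cos θ := by
        rw [← hca]
        exact Real.cos_le_cos_of_nonneg_of_le_pi hθ1 (by linarith [Real.pi_pos]) hθ2
      have hcos0 : 0 ≤ Real.cos θ := by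
        apply Real.cos_nonneg_of_mem_Icc
        exact ⟨by linarith [Real.pi_div_two_pos], by linarith⟩
      exact mul_nonneg (pow_nonneg (by linarith) _) hcos0
    linarith
  -- main derivative statement
  have hderiv : ∀ t ∈ Set.Ioo (0:ℝ) 1,
      HasDerivAt (hfun d) (-((d : ℝ) - 1) * hfun (d - 1) t) t := by
    intro t₀ ht₀
    have h01 : (0:ℝ) < 1 := one_pos
    have ht0 : 0 < t₀ := ht₀.1
    have ht1 : t₀ < 1 := ht₀.2
    have ha0 : 0 < Real.arccos t₀ := Real.arccos_pos.2 ht1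
    have ha1 : Real.arccos t₀ < π / 2 := Real.arccos_lt_pi_div_two.2 ht0
    have hca : Real.cos (Real.arccos t₀) = t₀ := Real.cos_arccos (by linarith) (le_of_lt ht1)
    set F' : ℝ → ℝ := fun θ =>
      if t₀ < Real.cos θ then -(n:ℝ) * (Real.cos θ - t₀) ^ (n-1) * Real.cos θ else 0 with hF'_def
    -- a.e. avoid arccos t₀
    have hae : ∀ᵐ θ : ℝ, θ ≠ Real.arccos t₀ := by
      rw [ae_iff]
      simp only [not_ne_iff, setOf_eq_eq_singleton]
      exact measure_singleton _
    have key := intervalIntegral.hasDerivAt_integral_of_dominated_loc_of_lip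
      (F := fun x θ => max (Real.cos θ - x) 0 ^ n * Real.cos θ) (F' := F')
      (x₀ := t₀) (a := 0) (b := π/2) (μ := volume)
      (bound := fun _ => (n : ℝ) * 2 ^ (n-1)) (Metric.ball_mem_nhds t₀ one_pos)
      ?_ ?_ ?_ ?_ ?_ ?_
    · -- use key to conclude
      obtain ⟨hF'int, hkey⟩ := key
      -- compute the integral of F'
      have hsplit : ∫ θ in (0:ℝ)..(π/2), F' θ
          = (∫ θ in (0:ℝ)..Real.arccos t₀, F' θ)
            + ∫ θ in (Real.arccos t₀)..(π/2), F' θ := by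
        rw [intervalIntegral.integral_add_adjacent_intervals]
        · apply hF'int.mono_set
          rw [Set.uIcc_of_le ha0.le, Set.uIcc_of_le (by linarith [Real.pi_div_two_pos] : (0:ℝ) ≤ π/2)]
          exact Set.Icc_subset_Icc le_rfl ha1.le
        · apply hF'int.mono_set
          rw [Set.uIcc_of_le ha1.le, Set.uIcc_of_le (by linarith [Real.pi_div_two_pos] : (0:ℝ) ≤ π/2)]
          exact Set.Icc_subset_Icc ha0.le le_rfl
      have hsecond : ∫ θ in (Real.arccos t₀)..(π/2), F' θ = 0 := by
        rw [intervalIntegral.integral_congr_ae (g := fun _ => (0:ℝ))]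
        · simp
        · filter_upwards with θ hθ
          rw [Set.uIoc_of_le ha1.le] at hθ
          have : Real.cos θ < t₀ := by
            rw [← hca]
            apply Real.strictAntiOn_cos ⟨Real.arccos_nonneg t₀, Real.arccos_le_pi t₀⟩
              ⟨by linarith [hθ.1, Real.arccos_nonneg t₀], by linarith [hθ.2, Real.pi_pos]⟩ hθ.1
          simp [hF'_def, not_lt.2 this.le, this.not_gt]
      have hfirst : ∫ θ in (0:ℝ)..Real.arccos t₀, F' θ
          = -(n:ℝ) * ∫ θ in (0:ℝ)..Real.arccos t₀, (Real.cos θ - t₀) ^ (n-1) * Real.cos θ := by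
        rw [← intervalIntegral.integral_const_mul]
        apply intervalIntegral.integral_congr_ae
        filter_upwards [hae] with θ hθne hθ
        rw [Set.uIoc_of_le ha0.le] at hθ
        have hθlt : θ < Real.arccos t₀ := lt_of_le_of_ne hθ.2 hθne
        have : t₀ < Real.cos θ := by
          rw [← hca]
          apply Real.strictAntiOn_cos ⟨hθ.1.le, by linarith [Real.pi_pos]⟩
            ⟨Real.arccos_nonneg t₀, Real.arccos_le_pi t₀⟩ hθlt
        simp only [hF'_def, if_pos this]
        ring
      -- conclude hasDerivAt for hfun d
      have hkey2 : HasDerivAt G (2 * ∫ θ in (0:ℝ)..(π/2), F' θ) t₀ := hkey.const_mul 2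
      have heq : hfun d =ᶠ[nhds t₀] G :=
        Filter.eventuallyEq_of_mem (Ioo_mem_nhds ht0 ht1)
          (fun x hx => hGfun x ⟨hx.1.le, hx.2.le⟩)
      have hfinal : HasDerivAt (hfun d) (2 * ∫ θ in (0:ℝ)..(π/2), F' θ) t₀ :=
        hkey2.congr_of_eventuallyEq heq
      have hval : 2 * ∫ θ in (0:ℝ)..(π/2), F' θ = -((d : ℝ) - 1) * hfun (d - 1) t₀ := by
        rw [hsplit, hsecond, add_zero, hfirst, hprev t₀ ⟨ht0.le, ht1.le⟩, ← hdn]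
        ring
      rwa [hval] at hfinal
    · -- hF_meas
      filter_upwards with x
      apply Continuous.aestronglyMeasurable
      fun_prop
    · -- hF_int
      apply Continuous.intervalIntegrable; fun_prop
    · -- hF'_meas
      apply Measurable.aestronglyMeasurable
      apply Measurable.ite
      · exact measurableSet_lt measurable_const Real.continuous_cos.measurable
      · fun_prop
      · fun_prop
    · -- Lipschitz
      filter_upwards with θ hθ
      rw [lipschitzOnWith_iff_dist_le_mul]
      intro x hx y hy
      simp only [Real.dist_eq]
      have hcθ : |Real.cos θ| ≤ 1 := Real.abs_cos_le_one θ
      have hmx : |max (Real.cos θ - x) 0| ≤ 2 := by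
        rw [abs_of_nonneg (le_max_right _ _)]
        rw [Metric.mem_ball, Real.dist_eq] at hx
        have : Real.cos θ - x ≤ 2 := by
          cases' abs_lt.1 hx with h1 h2
          have := Real.cos_le_one θ
          nlinarith [ht0]
        exact max_le this (by norm_num)
      have hmy : |max (Real.cos θ - y) 0| ≤ 2 := by
        rw [abs_of_nonneg (le_max_right _ _)]
        rw [Metric.mem_ball, Real.dist_eq] at hy
        have : Real.cos θ - y ≤ 2 := by
          cases' abs_lt.1 hy with h1 h2
          have := Real.cos_le_one θ
          nlinarith [ht0]
        exact max_le this (by norm_num)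
      have hlip : |max (Real.cos θ - x) 0 - max (Real.cos θ - y) 0| ≤ |x - y| := by
        have := abs_max_sub_max_le_abs (Real.cos θ - x) (Real.cos θ - y) 0
        calc |max (Real.cos θ - x) 0 - max (Real.cos θ - y) 0|
            ≤ |(Real.cos θ - x) - (Real.cos θ - y)| := this
          _ = |y - x| := by ring_nf
          _ = |x - y| := abs_sub_comm y x
      calc |max (Real.cos θ - x) 0 ^ n * Real.cos θ - max (Real.cos θ - y) 0 ^ n * Real.cos θ|
          = |max (Real.cos θ - x) 0 ^ n - max (Real.cos θ - y) 0 ^ n| * |Real.cos θ| := by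
            rw [← abs_mul]; ring_nf
        _ ≤ (n * 2 ^ (n-1) * |max (Real.cos θ - x) 0 - max (Real.cos θ - y) 0|) * 1 := by
            apply mul_le_mul (abs_pow_sub_pow_le' n hmx hmy) hcθ (abs_nonneg _)
            positivity
        _ ≤ n * 2 ^ (n-1) * |x - y| := by
            rw [mul_one]
            gcongr
        _ = ↑(Real.nnabs ((n:ℝ) * 2 ^ (n-1))) * |x - y| := by
            rw [Real.coe_nnabs,
              abs_of_nonneg (show (0:ℝ) ≤ (n:ℝ) * 2 ^ (n-1) by positivity)]
    · -- bound integrable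
      apply intervalIntegrable_const
    · -- a.e. differentiability
      filter_upwards [hae] with θ hθne hθ
      rw [Set.uIoc_of_le (by linarith [Real.pi_div_two_pos] : (0:ℝ) ≤ π/2)] at hθ
      rcases lt_trichotomy t₀ (Real.cos θ) with hlt | heq | hgt
      · -- cos θ > t₀
        have hder : HasDerivAt (fun x => (Real.cos θ - x) ^ n * Real.cos θ)
            ((↑n * (Real.cos θ - t₀) ^ (n - 1) * (-1)) * Real.cos θ) t₀ :=
          (((hasDerivAt_id t₀).const_sub (Real.cos θ)).pow n).mul_const _
        have hev : (fun x => max (Real.cos θ - x) 0 ^ n * Real.cos θ)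
            =ᶠ[nhds t₀] fun x => (Real.cos θ - x) ^ n * Real.cos θ := by
          have hopen : IsOpen {x : ℝ | x < Real.cos θ} := isOpen_Iio
          apply Filter.eventuallyEq_of_mem (hopen.mem_nhds hlt)
          intro x hx
          simp only [Set.mem_setOf_eq] at hx
          simp only
          rw [max_eq_left (by linarith : (0:ℝ) ≤ Real.cos θ - x)]
        have := hder.congr_of_eventuallyEq hev
        convert this using 1
        simp only [hF'_def, if_pos hlt]
        ring
      · -- cos θ = t₀ : excluded a.e.
        exfalso
        apply hθne
        have hθ0 : 0 ≤ θ := hθ.1.le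
        have hθπ : θ ≤ π := by linarith [hθ.2, Real.pi_pos]
        rw [heq]
        exact (Real.arccos_cos hθ0 hθπ).symm
      · -- cos θ < t₀
        have hev : (fun x => max (Real.cos θ - x) 0 ^ n * Real.cos θ)
            =ᶠ[nhds t₀] fun _ => (0:ℝ) := by
          have hopen : IsOpen {x : ℝ | Real.cos θ < x} := isOpen_Ioi
          apply Filter.eventuallyEq_of_mem (hopen.mem_nhds hgt)
          intro x hx
          simp only [Set.mem_setOf_eq] at hx
          simp only
          rw [max_eq_right (by linarith : Real.cos θ - x ≤ (0:ℝ)), zero_pow (by omega : n ≠ 0),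
            zero_mul]
        have hder : HasDerivAt (fun _ : ℝ => (0:ℝ)) 0 t₀ := hasDerivAt_const t₀ 0
        have := hder.congr_of_eventuallyEq hev
        convert this using 1
        simp [hF'_def, not_lt.2 hgt.le, hgt.not_gt]
  refine ⟨hderiv, ?_, ?_⟩
  · -- antitone
    apply antitoneOn_of_deriv_nonpos (convex_Icc 0 1)
    · exact hGcont.continuousOn.congr hGfun
    · rw [interior_Icc]
      intro x hx
      exact (hderiv x hx).differentiableAt.differentiableWithinAt
    · rw [interior_Icc]
      intro x hx
      rw [(hderiv x hx).deriv]
      have h1 : 0 ≤ hfun (d-1) x := hprev_nonneg x ⟨hx.1.le, hx.2.le⟩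
      have h2 : (0:ℝ) ≤ (d:ℝ) - 1 := by
        have : (2:ℝ) ≤ d := by exact_mod_cast hd
        linarith
      nlinarith
  · -- hfun d 1 = 0
    simp [hfun]
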